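/- arXiv:1702.03507 — 6 statements merged into one kernel-verified Lean document; each statement's English description precedes it below -/
import Mathlib

section
/- Fix α > 2, P₁ > 0 and λ₁ > 0, and for each I > 0 let R(I) denote the unique positive solution of (I/P₁)·R^α − (2πλ₁/(α−2))·R² − 1 = 0. Then R is strictly decreasing in I: if 0 < I₁ < I₂ then R(I₂) < R(I₁). (Remark 1, item 1: the empty-ball radius decreases with the measured interference.) -/
open Real

/-- Remark 1, item 1: the empty-ball radius strictly decreases with the measured
interference `I`. -/
theorem empty_ball_radius_strictAnti_in_I (α P₁ lam1 : ℝ) (hα : 2 < α) (hP : 0 < P₁)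
    (hlam1 : 0 < lam1) (R : ℝ → ℝ)
    (hR : ∀ I : ℝ, 0 < I →
      0 < R I ∧ (I / P₁) * R I ^ α - (2 * π * lam1 / (α - 2)) * R I ^ 2 - 1 = 0)
    (I₁ I₂ : ℝ) (hI₁ : 0 < I₁) (hI₁₂ : I₁ < I₂) : R I₂ < R I₁ := by
  obtain ⟨hR₁pos, h₁⟩ := hR I₁ hI₁
  obtain ⟨hR₂pos, h₂⟩ := hR I₂ (hI₁.trans hI₁₂)
  by_contra hle
  push_neg at hle
  set c : ℝ := 2 * π * lam1 / (α - 2) with hc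
  have hcpos : 0 < c := by
    apply div_pos _ (by linarith)
    positivity
  set R₁ := R I₁
  set R₂ := R I₂
  have e₁ : (I₁ / P₁) * R₁ ^ α = c * R₁ ^ 2 + 1 := by linarith
  have e₂ : (I₂ / P₁) * R₂ ^ α = c * R₂ ^ 2 + 1 := by linarith
  set t : ℝ := R₂ / R₁ with ht
  have ht1 : 1 ≤ t := (one_le_div hR₁pos).2 hle
  have htpos : 0 < t := lt_of_lt_of_le one_pos ht1
  have hR₂eq : R₂ = R₁ * t := by rw [ht, mul_div_assoc', mul_div_cancel_left₀ _ hR₁pos.ne']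
  have htα : t ^ (2:ℝ) ≤ t ^ α := rpow_le_rpow_of_exponent_le ht1 hα.le
  have ht2 : t ^ (2:ℝ) = t ^ 2 := by
    rw [show (2:ℝ) = ((2:ℕ):ℝ) by norm_num, rpow_natCast]
  rw [ht2] at htα
  have hsplit : R₂ ^ α = R₁ ^ α * t ^ α := by
    rw [hR₂eq, mul_rpow hR₁pos.le htpos.le]
  have hRα₁pos : 0 < R₁ ^ α := rpow_pos_of_pos hR₁pos α
  have hRα₂pos : 0 < R₂ ^ α := rpow_pos_of_pos hR₂pos α
  have k1 : (I₁ / P₁) * R₂ ^ α = (c * R₁ ^ 2 + 1) * t ^ α := by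
    rw [hsplit, ← e₁]; ring
  have k2 : (c * R₁ ^ 2 + 1) * t ^ 2 ≤ (c * R₁ ^ 2 + 1) * t ^ α := by
    apply mul_le_mul_of_nonneg_left htα
    nlinarith [sq_nonneg R₁]
  have k3 : (c * R₁ ^ 2 + 1) * t ^ 2 = c * R₂ ^ 2 + t ^ 2 := by
    rw [hR₂eq]; ring
  have k4 : 1 ≤ t ^ 2 := by nlinarith
  have k5 : (I₁ / P₁) * R₂ ^ α < (I₂ / P₁) * R₂ ^ α := by
    apply mul_lt_mul_of_pos_right _ hRα₂pos
    gcongr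
  linarith
end

section
/- Fix α > 2, λ₁ > 0 and I > 0, and for each P₁ > 0 let R(P₁) denote the unique positive solution of (I/P₁)·R^α − (2πλ₁/(α−2))·R² − 1 = 0. Then R is strictly increasing in P₁: if 0 < P < P' then R(P) < R(P'). (Remark 1, item 2: for higher primary transmit power the empty-ball radius increases.) -/
open Real

/-- Remark 1, item 2: the empty-ball radius strictly increases with the primary
transmit power `P₁`. -/
theorem empty_ball_radius_strictMono_in_power (α lam1 I : ℝ) (hα : 2 < α) (hlam1 : 0 < lam1)
    (hI : 0 < I) (R : ℝ → ℝ)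
    (hR : ∀ P₁ : ℝ, 0 < P₁ →
      0 < R P₁ ∧ (I / P₁) * R P₁ ^ α - (2 * π * lam1 / (α - 2)) * R P₁ ^ 2 - 1 = 0)
    (P P' : ℝ) (hP : 0 < P) (hPP' : P < P') : R P < R P' := by
  obtain ⟨hr, heq⟩ := hR P hP
  obtain ⟨hr', heq'⟩ := hR P' (hP.trans hPP')
  by_contra hle
  push_neg at hle
  set c := 2 * π * lam1 / (α - 2) with hc
  set r := R P
  set r' := R P'
  have hc0 : 0 < c := by
    apply div_pos _ (by linarith)
    positivity
  have hA : I / P' < I / P := div_lt_div_of_pos_left hI hP hPP'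
  have hA'pos : 0 < I / P' := div_pos hI (hP.trans hPP')
  have hsplit : ∀ x : ℝ, 0 < x → x ^ α = x ^ (α - 2) * x ^ 2 := by
    intro x hx
    rw [← Real.rpow_natCast x 2, ← Real.rpow_add hx]
    norm_num
  have ht : 0 < r ^ (α - 2) := Real.rpow_pos_of_pos hr _
  have ht' : 0 < r' ^ (α - 2) := Real.rpow_pos_of_pos hr' _
  have htle : r' ^ (α - 2) ≤ r ^ (α - 2) :=
    Real.rpow_le_rpow hr'.le hle (by linarith)
  have hr2 : 0 < r ^ 2 := by positivity
  have hr'2 : 0 < r' ^ 2 := by positivity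
  have hsq : r' ^ 2 ≤ r ^ 2 := by nlinarith
  rw [hsplit r hr] at heq
  rw [hsplit r' hr'] at heq'
  have h1 : (I / P) * r ^ (α - 2) = c + (r ^ 2)⁻¹ := by
    have key : (c + (r ^ 2)⁻¹) * r ^ 2 = c * r ^ 2 + 1 := by field_simp
    refine mul_right_cancel₀ hr2.ne' ?_
    rw [key, mul_assoc]
    linarith
  have h2 : (I / P') * r' ^ (α - 2) = c + (r' ^ 2)⁻¹ := by
    have key : (c + (r' ^ 2)⁻¹) * r' ^ 2 = c * r' ^ 2 + 1 := by field_simp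
    refine mul_right_cancel₀ hr'2.ne' ?_
    rw [key, mul_assoc]
    linarith
  have hinv : (r ^ 2)⁻¹ ≤ (r' ^ 2)⁻¹ := inv_anti₀ hr'2 hsq
  have chain : (I / P') * r' ^ (α - 2) ≤ (I / P') * r ^ (α - 2) := by
    apply mul_le_mul_of_nonneg_left htle hA'pos.le
  have chain2 : (I / P') * r ^ (α - 2) < (I / P) * r ^ (α - 2) :=
    mul_lt_mul_of_pos_right hA ht
  rw [h1, h2] at *
  linarith
end

section
/- Fix α > 2, P₁ > 0 and λ₁ > 0, and for each I > 0 let R(I) denote the unique positive solution of (I/P₁)·R^α − (2πλ₁/(α−2))·R² − 1 = 0. Then the map I ↦ R(I) is a strictly decreasing bijection from (0, ∞) onto (0, ∞). -/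
open Real

/-- The map `I ↦ R(I)` sending the measured interference to the empty-ball radius is a
strictly decreasing bijection from `(0, ∞)` onto `(0, ∞)`. -/
theorem empty_ball_radius_strictAntiOn_bijOn (α P₁ lam1 : ℝ) (hα : 2 < α) (hP : 0 < P₁)
    (hlam1 : 0 < lam1) (R : ℝ → ℝ)
    (hR : ∀ I : ℝ, 0 < I →
      0 < R I ∧ (I / P₁) * R I ^ α - (2 * π * lam1 / (α - 2)) * R I ^ 2 - 1 = 0) :
    StrictAntiOn R (Set.Ioi 0) ∧ Set.BijOn R (Set.Ioi 0) (Set.Ioi 0) := by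
  have hα2 : (0:ℝ) < α - 2 := by linarith
  set c : ℝ := 2 * π * lam1 / (α - 2) with hc_def
  have hc : 0 < c := by
    apply div_pos _ hα2
    have := Real.pi_pos
    positivity
  set f : ℝ → ℝ := fun x => P₁ * (c * x ^ 2 + 1) / x ^ α with hf_def
  have hfpos : ∀ x, 0 < x → 0 < f x := by
    intro x hx
    have hxα : (0:ℝ) < x ^ α := Real.rpow_pos_of_pos hx α
    have : (0:ℝ) < c * x ^ 2 + 1 := by positivity
    simp only [hf_def]
    positivity
  have hfanti : ∀ x y, 0 < x → x < y → f y < f x := by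
    intro x y hx hxy
    have hy : 0 < y := hx.trans hxy
    have hxα : (0:ℝ) < x ^ α := Real.rpow_pos_of_pos hx α
    have hyα : (0:ℝ) < y ^ α := Real.rpow_pos_of_pos hy α
    simp only [hf_def]
    rw [div_lt_div_iff₀ hyα hxα]
    have h1 : x ^ α < y ^ α := Real.rpow_lt_rpow hx.le hxy (by linarith)
    have e1 : x ^ α = x ^ 2 * x ^ (α - 2) := by
      rw [← Real.rpow_natCast x 2, ← Real.rpow_add hx]
      norm_num
    have e2 : y ^ α = y ^ 2 * y ^ (α - 2) := by
      rw [← Real.rpow_natCast y 2, ← Real.rpow_add hy]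
      norm_num
    have h3 : x ^ (α - 2) ≤ y ^ (α - 2) := Real.rpow_le_rpow hx.le hxy.le hα2.le
    have key : y ^ 2 * x ^ α ≤ x ^ 2 * y ^ α := by
      rw [e1, e2]
      nlinarith [mul_le_mul_of_nonneg_left h3 (by positivity : (0:ℝ) ≤ y ^ 2 * x ^ 2)]
    nlinarith [mul_pos hc hP]
  have hfR : ∀ I, 0 < I → f (R I) = I := by
    intro I hI
    obtain ⟨hRpos, heq⟩ := hR I hI
    have hRα : 0 < R I ^ α := Real.rpow_pos_of_pos hRpos α
    simp only [hf_def]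
    rw [div_eq_iff hRα.ne']
    field_simp at heq
    nlinarith [heq]
  have hanti : StrictAntiOn R (Set.Ioi 0) := by
    intro I hI J hJ hIJ
    simp only [Set.mem_Ioi] at hI hJ
    have h1 : f (R I) = I := hfR I hI
    have h2 : f (R J) = J := hfR J hJ
    have hRI : 0 < R I := (hR I hI).1
    have hRJ : 0 < R J := (hR J hJ).1
    rcases lt_trichotomy (R J) (R I) with h | h | h
    · exact h
    · exfalso; rw [← h] at h1; linarith [h1, h2]
    · exfalso
      have := hfanti (R I) (R J) hRI h
      linarith
  refine ⟨hanti, ?_, hanti.injOn, ?_⟩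
  · intro I hI
    exact (hR I hI).1
  · intro y hy
    simp only [Set.mem_Ioi] at hy
    have hfy : 0 < f y := hfpos y hy
    refine ⟨f y, Set.mem_Ioi.mpr hfy, ?_⟩
    have hRpos : 0 < R (f y) := (hR (f y) hfy).1
    have heq : f (R (f y)) = f y := hfR (f y) hfy
    rcases lt_trichotomy (R (f y)) y with h | h | h
    · exfalso; have := hfanti (R (f y)) y hRpos h; linarith
    · exact h
    · exfalso; have := hfanti y (R (f y)) hy h; linarith
end

section
/- (Pfaff-transformation bound used in the proof of Proposition 2.) For every real α > 2 and every t > 0, 1 + t^{2/α} · ∫_{t^{−2/α}}^{∞} 1/(1 + u^{α/2}) du ≤ ρ · (1 + t)^{2/α}, where ρ := (2π/α)/sin(2π/α). -/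
open Real MeasureTheory
open Set intervalIntegral Filter Topology

/-- Real Beta integral B(δ, 1-δ) as a set integral over `Ioo 0 1`. -/
lemma beta_Ioo (δ : ℝ) (h0 : 0 < δ) (h1 : δ < 1) :
    ∫ x in Ioo (0:ℝ) 1, x ^ (δ - 1) * (1 - x) ^ (-δ) = π / Real.sin (π * δ) := by
  have h := Complex.Gamma_mul_Gamma_eq_betaIntegral (s := (δ:ℂ)) (t := ((1 - δ :ℝ):ℂ))
    (by simpa using h0) (by simpa using sub_pos.mpr h1)
  rw [show ((δ:ℂ) + ((1-δ:ℝ):ℂ)) = 1 by push_cast; ring, Complex.Gamma_one, one_mul] at h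
  have hbeta : Complex.betaIntegral (δ:ℂ) ((1-δ:ℝ):ℂ)
      = ((∫ x in Ioo (0:ℝ) 1, x ^ (δ - 1) * (1 - x) ^ (-δ) : ℝ) : ℂ) := by
    rw [Complex.betaIntegral]
    rw [intervalIntegral.integral_of_le zero_le_one, ← integral_Ioc_eq_integral_Ioo]
    rw [show ((∫ (t : ℝ) in Ioc (0:ℝ) 1, t ^ (δ - 1) * (1 - t) ^ (-δ) : ℝ) : ℂ)
        = ∫ (t : ℝ) in Ioc (0:ℝ) 1, ((t ^ (δ - 1) * (1 - t) ^ (-δ) : ℝ) : ℂ)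
      from (_root_.integral_ofReal).symm]
    refine setIntegral_congr_fun measurableSet_Ioc (fun x hx => ?_)
    have hx0 : (0:ℝ) ≤ x := le_of_lt hx.1
    have hx1 : (0:ℝ) ≤ 1 - x := by linarith [hx.2]
    push_cast
    rw [Complex.ofReal_cpow hx0, Complex.ofReal_cpow hx1]
    push_cast
    ring_nf
  rw [hbeta] at h
  have h2 : Complex.Gamma (δ:ℂ) * Complex.Gamma ((1-δ:ℝ):ℂ)
      = ((Real.Gamma δ * Real.Gamma (1 - δ) : ℝ) : ℂ) := by
    rw [Complex.Gamma_ofReal, Complex.Gamma_ofReal]; push_cast; ring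
  rw [h2] at h
  have h3 : Real.Gamma δ * Real.Gamma (1 - δ) = ∫ x in Ioo (0:ℝ) 1, x ^ (δ - 1) * (1 - x) ^ (-δ) :=
    by exact_mod_cast h
  rw [← h3, Real.Gamma_mul_Gamma_one_sub]

/-- `∫_0^∞ y^(δ-1)/(1+y) dy = π / sin (π δ)` for `0 < δ < 1`. -/
lemma int_rpow_div_one_add (δ : ℝ) (h0 : 0 < δ) (h1 : δ < 1) :
    ∫ y in Ioi (0:ℝ), y ^ (δ - 1) / (1 + y) = π / Real.sin (π * δ) := by
  rw [← beta_Ioo δ h0 h1]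
  have himg : (fun y : ℝ => y / (1 + y)) '' Ioi 0 = Ioo 0 1 := by
    ext x
    constructor
    · rintro ⟨y, hy, rfl⟩
      have hy' : (0:ℝ) < y := hy
      have h1y : (0:ℝ) < 1 + y := by linarith
      constructor
      · positivity
      · rw [div_lt_one h1y]; linarith
    · rintro ⟨hx0, hx1⟩
      have h1x : (0:ℝ) < 1 - x := by linarith
      refine ⟨x / (1 - x), mem_Ioi.mpr (by positivity), ?_⟩
      field_simp
      ring
  have hderiv : ∀ y ∈ Ioi (0:ℝ),
      HasDerivWithinAt (fun y : ℝ => y / (1 + y)) ((1 + y)⁻¹ ^ 2) (Ioi 0) y := by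
    intro y hy
    have h1y : (1 + y) ≠ 0 := by have : (0:ℝ) < y := hy; positivity
    have := (hasDerivAt_id y).div ((hasDerivAt_id y).const_add 1) h1y
    refine (this.congr_deriv ?_).hasDerivWithinAt
    simp only [id_eq]
    rw [inv_pow, ← one_div]
    congr 1
    ring
  have hinj : InjOn (fun y : ℝ => y / (1 + y)) (Ioi 0) := by
    intro a ha b hb hab
    have ha' : (0:ℝ) < 1 + a := by have : (0:ℝ) < a := ha; linarith
    have hb' : (0:ℝ) < 1 + b := by have : (0:ℝ) < b := hb; linarith
    field_simp at hab
    linarith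
  have := integral_image_eq_integral_abs_deriv_smul measurableSet_Ioi hderiv hinj
    (fun x => x ^ (δ - 1) * (1 - x) ^ (-δ))
  rw [himg] at this
  rw [this]
  refine setIntegral_congr_fun measurableSet_Ioi (fun y hy => ?_)
  have hy0 : (0:ℝ) < y := hy
  have h1y : (0:ℝ) < 1 + y := by linarith
  have key1 : (1:ℝ) - y / (1 + y) = (1 + y)⁻¹ := by field_simp; ring
  have key2 : (y / (1 + y)) ^ (δ - 1) = y ^ (δ - 1) * ((1 + y) ^ (δ - 1))⁻¹ := by
    rw [div_rpow hy0.le h1y.le, div_eq_mul_inv]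
  have key3 : ((1 + y)⁻¹) ^ (-δ) = (1 + y) ^ δ := by
    rw [← rpow_neg_one (1 + y), ← rpow_mul h1y.le]
    norm_num
  have key4 : |((1 + y)⁻¹) ^ (2:ℕ)| = ((1 + y) ^ ((2:ℝ)))⁻¹ := by
    rw [abs_of_nonneg (by positivity), inv_pow, ← rpow_natCast (1+y) 2]
    norm_num
  simp only [smul_eq_mul]
  rw [key1, key2, key3, key4]
  rw [← rpow_neg h1y.le, ← rpow_neg h1y.le]
  rw [div_eq_mul_inv, ← rpow_neg_one (1+y)]
  rw [show (1 + y) ^ (-(2:ℝ)) * (y ^ (δ - 1) * (1 + y) ^ (-(δ - 1)) * (1 + y) ^ δ)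
      = y ^ (δ - 1) * ((1+y) ^ (-(2:ℝ)) * ((1+y) ^ (-(δ - 1)) * (1+y) ^ δ)) from by ring,
    ← rpow_add h1y, ← rpow_add h1y]
  rw [show (-(2:ℝ) + (-(δ - 1) + δ)) = -1 by ring]

lemma int_rpow_div_c_add (δ : ℝ) (h0 : 0 < δ) (h1 : δ < 1) {c : ℝ} (hc : 0 < c) :
    ∫ y in Ioi (0:ℝ), y ^ (δ - 1) / (c + y) = c ^ (δ - 1) * (π / Real.sin (π * δ)) := by
  have h := MeasureTheory.integral_comp_mul_left_Ioi
    (fun y => y ^ (δ - 1) / (c + y)) 0 hc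
  rw [mul_zero] at h
  have h2 : ∀ x ∈ Ioi (0:ℝ), (c * x) ^ (δ - 1) / (c + c * x)
      = c ^ (δ - 1 - 1) * (x ^ (δ - 1) / (1 + x)) := by
    intro x hx
    have hx0 : (0:ℝ) < x := hx
    have e1 : c ^ (δ - 1 - 1) = c ^ (δ - 1) / c := by rw [rpow_sub hc, rpow_one]
    rw [mul_rpow hc.le hx0.le, show c + c * x = c * (1 + x) by ring, mul_div_mul_comm, ← e1]
  rw [setIntegral_congr_fun measurableSet_Ioi h2, MeasureTheory.integral_const_mul] at h
  rw [int_rpow_div_one_add δ h0 h1] at h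
  have hc' : c ^ (δ - 1 - 1) = c⁻¹ * c ^ (δ - 1) := by
    rw [rpow_sub hc, rpow_one, div_eq_mul_inv, mul_comm]
  rw [hc', mul_assoc, smul_eq_mul] at h
  rw [← mul_left_cancel₀ (inv_ne_zero hc.ne') h]

lemma tail_subst (δ t : ℝ) (h0 : 0 < δ) (ht : 0 < t) :
    t ^ δ * ∫ u in Ioi (t ^ (-δ)), 1 / (1 + u ^ δ⁻¹)
      = δ * ∫ z in Ioi (1:ℝ), t * z ^ (δ - 1) / (t + z) := by
  have himg : (fun z : ℝ => (z / t) ^ δ) '' Ioi 1 = Ioi (t ^ (-δ)) := by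
    have htneg : t ^ (-δ) = (t⁻¹) ^ δ := by
      rw [rpow_neg ht.le, ← inv_rpow ht.le]
    ext u
    constructor
    · rintro ⟨z, hz, rfl⟩
      have hz1 : (1:ℝ) < z := hz
      rw [mem_Ioi, htneg]
      have hlt : t⁻¹ < z / t := by
        rw [div_eq_mul_inv]
        calc t⁻¹ = 1 * t⁻¹ := (one_mul _).symm
        _ < z * t⁻¹ := mul_lt_mul_of_pos_right hz1 (inv_pos.mpr ht)
      exact rpow_lt_rpow (by positivity) hlt h0
    · intro hu
      have hu' : t ^ (-δ) < u := hu
      have hupos : (0:ℝ) < u := lt_trans (rpow_pos_of_pos ht _) hu'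
      refine ⟨t * u ^ δ⁻¹, ?_, ?_⟩
      · have : (t ^ (-δ)) ^ δ⁻¹ < u ^ δ⁻¹ :=
          rpow_lt_rpow (rpow_pos_of_pos ht _).le hu' (by positivity)
        rw [← rpow_mul ht.le, show -δ * δ⁻¹ = -1 by field_simp, rpow_neg_one] at this
        have := (mul_lt_mul_iff_right₀ ht).mpr this
        rw [mul_inv_cancel₀ ht.ne'] at this
        exact this
      · have htu : (t * u ^ δ⁻¹) / t = u ^ δ⁻¹ := by field_simp
        show ((t * u ^ δ⁻¹) / t) ^ δ = u
        rw [htu, ← rpow_mul hupos.le, inv_mul_cancel₀ (ne_of_gt h0), rpow_one]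
  have hderiv : ∀ z ∈ Ioi (1:ℝ),
      HasDerivWithinAt (fun z : ℝ => (z / t) ^ δ) (δ * (z / t) ^ (δ - 1) * t⁻¹) (Ioi 1) z := by
    intro z hz
    have hz1 : (1:ℝ) < z := hz
    have hzt : (0:ℝ) < z / t := by positivity
    have hinner : HasDerivAt (fun z : ℝ => z / t) t⁻¹ z := by
      simpa using (hasDerivAt_id z).div_const t
    have houter : HasDerivAt (fun x : ℝ => x ^ δ) (δ * (z / t) ^ (δ - 1)) (z / t) :=
      Real.hasDerivAt_rpow_const (Or.inl hzt.ne')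
    exact (HasDerivAt.comp z houter hinner).hasDerivWithinAt
  have hinj : InjOn (fun z : ℝ => (z / t) ^ δ) (Ioi 1) := by
    intro a ha b hb hab
    have ha1 : (1:ℝ) < a := ha
    have hb1 : (1:ℝ) < b := hb
    by_contra hne
    rcases lt_or_gt_of_ne hne with hlt | hlt
    · have : (a / t) ^ δ < (b / t) ^ δ :=
        rpow_lt_rpow (by positivity) (by gcongr) h0
      simp only [hab] at this; exact lt_irrefl _ this
    · have : (b / t) ^ δ < (a / t) ^ δ :=
        rpow_lt_rpow (by positivity) (by gcongr) h0
      simp only [hab] at this; exact lt_irrefl _ this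
  have hsub := integral_image_eq_integral_abs_deriv_smul measurableSet_Ioi hderiv hinj
    (fun u => 1 / (1 + u ^ δ⁻¹))
  rw [himg] at hsub
  rw [hsub, ← MeasureTheory.integral_const_mul, ← MeasureTheory.integral_const_mul]
  refine setIntegral_congr_fun measurableSet_Ioi (fun z hz => ?_)
  have hz1 : (1:ℝ) < z := hz
  have hz0 : (0:ℝ) < z := lt_trans one_pos hz1
  have hzt : (0:ℝ) < z / t := by positivity
  have htz : (0:ℝ) < t + z := by positivity
  have e1 : ((z / t) ^ δ) ^ δ⁻¹ = z / t := by
    rw [← rpow_mul hzt.le, mul_inv_cancel₀ (ne_of_gt h0), rpow_one]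
  have e2 : 1 / (1 + z / t) = t / (t + z) := by
    rw [show 1 + z / t = (t + z) / t by field_simp, one_div_div]
  have e3 : |δ * (z / t) ^ (δ - 1) * t⁻¹| = δ * (z / t) ^ (δ - 1) * t⁻¹ :=
    abs_of_nonneg (by positivity)
  have e4 : (z / t) ^ (δ - 1) = z ^ (δ - 1) / t ^ (δ - 1) := div_rpow hz0.le ht.le _
  have e5 : t ^ δ = t ^ (δ - 1) * t := by
    rw [← rpow_add_one ht.ne' (δ - 1)]; ring_nf
  have ht1 : t ^ (δ - 1) ≠ 0 := (rpow_pos_of_pos ht _).ne'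
  rw [smul_eq_mul, e1, e2, e3, e4, e5]
  field_simp

lemma int_Ioc_rpow' (δ : ℝ) (h0 : 0 < δ) :
    ∫ y in Ioc (0:ℝ) 1, y ^ (δ - 1) = 1 / δ := by
  rw [← intervalIntegral.integral_of_le zero_le_one,
    integral_rpow (Or.inl (by linarith : (-1:ℝ) < δ - 1))]
  rw [zero_rpow (by linarith : δ - 1 + 1 ≠ 0), one_rpow]
  ring_nf

lemma int_Ioc_inv' (c : ℝ) (hc : 0 < c) :
    ∫ y in Ioc (0:ℝ) 1, 1 / (c + y) = Real.log (c + 1) - Real.log c := by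
  rw [← intervalIntegral.integral_of_le zero_le_one]
  have hderiv : ∀ y ∈ uIcc (0:ℝ) 1, HasDerivAt (fun y => Real.log (c + y)) (1 / (c + y)) y := by
    intro y hy
    rw [uIcc_of_le zero_le_one] at hy
    have hcy : (0:ℝ) < c + y := by have := hy.1; linarith
    have := (Real.hasDerivAt_log hcy.ne').comp y ((hasDerivAt_id y).const_add c)
    simpa [one_div, Function.comp_def] using this
  have hint : IntervalIntegrable (fun y => 1 / (c + y)) volume 0 1 := by
    apply ContinuousOn.intervalIntegrable
    intro y hy
    rw [uIcc_of_le zero_le_one] at hy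
    have hcy : (0:ℝ) < c + y := by have := hy.1; linarith
    exact (continuousWithinAt_const.div
      (continuousWithinAt_const.add continuousWithinAt_id) hcy.ne')
  rw [intervalIntegral.integral_eq_sub_of_hasDerivAt hderiv hint]
  simp [add_comm]

lemma integrableOn_diff_Ioi (t : ℝ) (ht : 0 < t) :
    IntegrableOn (fun y : ℝ => (t + y)⁻¹ - (1 + t + y)⁻¹) (Ioi 1) := by
  refine Integrable.mono (g := fun y : ℝ => y ^ (-2:ℝ))
    (integrableOn_Ioi_rpow_of_lt (by norm_num) one_pos) ?_ ?_
  · apply ContinuousOn.aestronglyMeasurable _ measurableSet_Ioi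
    intro y hy
    have hy1 : (1:ℝ) < y := hy
    have h1 : (0:ℝ) < t + y := by linarith
    have h2 : (0:ℝ) < 1 + t + y := by linarith
    exact ((continuousWithinAt_const.add continuousWithinAt_id).inv₀ h1.ne').sub
      ((continuousWithinAt_const.add continuousWithinAt_id).inv₀ h2.ne')
  · filter_upwards [ae_restrict_mem measurableSet_Ioi] with y hy
    have hy1 : (1:ℝ) < y := hy
    have hy0 : (0:ℝ) < y := lt_trans one_pos hy1
    have h1 : (0:ℝ) < t + y := by linarith
    have h2 : (0:ℝ) < 1 + t + y := by linarith
    have key : (t + y)⁻¹ - (1 + t + y)⁻¹ = ((t + y) * (1 + t + y))⁻¹ := by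
      field_simp
      ring
    rw [Real.norm_eq_abs, Real.norm_eq_abs, key, abs_of_nonneg (by positivity),
      abs_of_nonneg (rpow_nonneg hy0.le _), rpow_neg hy0.le,
      show (2:ℝ) = ((2:ℕ):ℝ) by norm_num, rpow_natCast]
    have hyy : y ^ 2 ≤ (t + y) * (1 + t + y) := by nlinarith
    exact inv_anti₀ (by positivity) hyy

lemma int_Ioi_diff' (t : ℝ) (ht : 0 < t) :
    ∫ y in Ioi (1:ℝ), ((t + y)⁻¹ - (1 + t + y)⁻¹)
      = Real.log (2 + t) - Real.log (1 + t) := by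
  have f'int : IntegrableOn (fun y : ℝ => (t + y)⁻¹ - (1 + t + y)⁻¹) (Ioi 1) :=
    integrableOn_diff_Ioi t ht
  have hderiv : ∀ y ∈ Ici (1:ℝ),
      HasDerivAt (fun y : ℝ => Real.log (t + y) - Real.log (1 + t + y))
        ((t + y)⁻¹ - (1 + t + y)⁻¹) y := by
    intro y hy
    have hy1 : (1:ℝ) ≤ y := hy
    have h1 : (0:ℝ) < t + y := by linarith
    have h2 : (0:ℝ) < 1 + t + y := by linarith
    have d1 := (Real.hasDerivAt_log h1.ne').comp y ((hasDerivAt_id y).const_add t)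
    have d2 := (Real.hasDerivAt_log h2.ne').comp y ((hasDerivAt_id y).const_add (1 + t))
    simpa [Function.comp_def, Pi.sub_def] using d1.sub d2
  have htend : Tendsto (fun y : ℝ => Real.log (t + y) - Real.log (1 + t + y)) atTop (𝓝 0) := by
    have h1 : Tendsto (fun y : ℝ => 1 - (1 + t + y)⁻¹) atTop (𝓝 (1 - 0)) :=
      tendsto_const_nhds.sub (tendsto_inv_atTop_zero.comp
        (tendsto_atTop_add_const_left _ (1 + t) tendsto_id))
    rw [sub_zero] at h1
    have h2 : Tendsto (fun y : ℝ => Real.log (1 - (1 + t + y)⁻¹)) atTop (𝓝 0) := by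
      rw [← Real.log_one]
      exact ((Real.continuousAt_log one_ne_zero).tendsto.comp h1)
    refine h2.congr' ?_
    filter_upwards [Filter.eventually_ge_atTop (1:ℝ)] with y hy
    have h1' : (0:ℝ) < t + y := by linarith
    have h2' : (0:ℝ) < 1 + t + y := by linarith
    rw [show 1 - (1 + t + y)⁻¹ = (t + y) / (1 + t + y) by field_simp; ring,
      Real.log_div h1'.ne' h2'.ne']
  rw [MeasureTheory.integral_Ioi_of_hasDerivAt_of_tendsto' hderiv f'int htend]
  have e1 : t + 1 = 1 + t := by ring
  have e2 : 1 + t + 1 = 2 + t := by ring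
  rw [e1, e2]
  ring

lemma contOn_Ioc (δ c : ℝ) (hc : 0 < c) :
    ContinuousOn (fun y : ℝ => y ^ δ / (c + y)) (Ioc (0:ℝ) 1) := by
  intro y hy
  have hy0 : (0:ℝ) < y := hy.1
  have hcy : (0:ℝ) < c + y := by linarith
  exact ((continuousWithinAt_id.rpow_const (Or.inl hy0.ne')).div
    (continuousWithinAt_const.add continuousWithinAt_id) hcy.ne')

lemma integrableOn_Ioc_rpow_div (δ c : ℝ) (h0 : 0 < δ) (hc : 0 < c) :
    IntegrableOn (fun y : ℝ => y ^ (δ - 1) / (c + y)) (Ioc (0:ℝ) 1) := by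
  have hA : IntegrableOn (fun y : ℝ => y ^ (δ - 1)) (Ioc (0:ℝ) 1) := by
    have := intervalIntegrable_rpow' (a := 0) (b := 1) (r := δ - 1) (by linarith)
    rwa [intervalIntegrable_iff_integrableOn_Ioc_of_le zero_le_one] at this
  refine (hA.const_mul c⁻¹).mono ?_ ?_
  · exact (contOn_Ioc (δ - 1) c hc).aestronglyMeasurable measurableSet_Ioc
  · filter_upwards [ae_restrict_mem measurableSet_Ioc] with y hy
    have hy0 : (0:ℝ) < y := hy.1
    have hcy : (0:ℝ) < c + y := by linarith
    have hpow : (0:ℝ) < y ^ (δ - 1) := rpow_pos_of_pos hy0 _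
    rw [Real.norm_eq_abs, Real.norm_eq_abs, abs_of_nonneg (by positivity),
      abs_of_nonneg (by positivity)]
    rw [div_eq_mul_inv, mul_comm]
    gcongr
    all_goals first | positivity | linarith | exact hpow.le

lemma contOn_Ioi (δ c : ℝ) (hc : 0 < c) :
    ContinuousOn (fun y : ℝ => y ^ δ / (c + y)) (Ioi (1:ℝ)) := by
  intro y hy
  have hy0 : (0:ℝ) < y := lt_trans one_pos hy
  have hcy : (0:ℝ) < c + y := by linarith
  exact ((continuousWithinAt_id.rpow_const (Or.inl hy0.ne')).div
    (continuousWithinAt_const.add continuousWithinAt_id) hcy.ne')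

lemma integrableOn_Ioi_rpow_div (p c : ℝ) (hp : p < 1) (hc : 0 < c) :
    IntegrableOn (fun y : ℝ => y ^ (p - 1) / (c + y)) (Ioi (1:ℝ)) := by
  refine MeasureTheory.Integrable.mono
    (integrableOn_Ioi_rpow_of_lt (show p - 1 - 1 < -1 by linarith) one_pos) ?_ ?_
  · exact (contOn_Ioi (p - 1) c hc).aestronglyMeasurable measurableSet_Ioi
  · filter_upwards [ae_restrict_mem measurableSet_Ioi] with y hy
    have hy0 : (0:ℝ) < y := lt_trans one_pos hy
    have hcy : (0:ℝ) < c + y := by linarith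
    have hpow : (0:ℝ) < y ^ (p - 1) := rpow_pos_of_pos hy0 _
    rw [Real.norm_eq_abs, Real.norm_eq_abs, abs_of_nonneg (by positivity),
      abs_of_nonneg (rpow_pos_of_pos hy0 _).le, rpow_sub hy0 (p-1) 1, rpow_one]
    gcongr
    all_goals first | positivity | linarith [mem_Ioi.mp hy] | exact hpow.le

lemma integrableOn_Ioc_rpow_div' (δ c : ℝ) (h0 : 0 ≤ δ) (hc : 0 < c) :
    IntegrableOn (fun y : ℝ => y ^ δ / (c + y)) (Ioc (0:ℝ) 1) := by
  have hCc : IntegrableOn (fun _ : ℝ => c⁻¹) (Ioc (0:ℝ) 1) volume :=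
    integrableOn_const measure_Ioc_lt_top.ne
  refine MeasureTheory.Integrable.mono hCc ?_ ?_
  · exact (contOn_Ioc δ c hc).aestronglyMeasurable measurableSet_Ioc
  · filter_upwards [ae_restrict_mem measurableSet_Ioc] with y hy
    have hy0 : (0:ℝ) < y := hy.1
    have hcy : (0:ℝ) < c + y := by linarith
    have h1 : y ^ δ ≤ 1 := rpow_le_one hy0.le hy.2 h0
    rw [Real.norm_eq_abs, Real.norm_eq_abs, abs_of_nonneg (by positivity),
      abs_of_nonneg (by positivity)]
    calc y ^ δ / (c + y) ≤ 1 / (c + y) := by gcongr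
    _ ≤ 1 / c := by gcongr; linarith
    _ = c⁻¹ := one_div c

lemma integrableOn_Ioi_prod (δ t : ℝ) (hδ : δ < 1) (ht : 0 < t) :
    IntegrableOn (fun y : ℝ => y ^ δ / ((t + y) * (1 + t + y))) (Ioi (1:ℝ)) := by
  refine MeasureTheory.Integrable.mono
    (integrableOn_Ioi_rpow_of_lt (show δ - 2 < -1 by linarith) one_pos) ?_ ?_
  · refine ContinuousOn.aestronglyMeasurable ?_ measurableSet_Ioi
    intro y hy
    have hy0 : (0:ℝ) < y := lt_trans one_pos (mem_Ioi.mp hy)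
    have h1 : (0:ℝ) < t + y := by linarith
    have h2 : (0:ℝ) < 1 + t + y := by linarith
    exact (continuousWithinAt_id.rpow_const (Or.inl hy0.ne')).div
      ((continuousWithinAt_const.add continuousWithinAt_id).mul
        (continuousWithinAt_const.add continuousWithinAt_id)) (by positivity)
  · filter_upwards [ae_restrict_mem measurableSet_Ioi] with y hy
    have hy1 : (1:ℝ) < y := hy
    have hy0 : (0:ℝ) < y := lt_trans one_pos hy1
    have h1 : (0:ℝ) < t + y := by linarith
    have h2 : (0:ℝ) < 1 + t + y := by linarith
    rw [Real.norm_eq_abs, Real.norm_eq_abs, abs_of_nonneg (by positivity),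
      abs_of_nonneg (rpow_pos_of_pos hy0 _).le,
      show δ - 2 = δ - 1 - 1 by ring, rpow_sub hy0, rpow_sub hy0, rpow_one]
    rw [div_div]
    gcongr
    all_goals first | positivity | nlinarith | exact (rpow_pos_of_pos hy0 δ).le

/-- Pfaff-transformation bound used in the proof of Proposition 2:
`1 + t^{2/α}·∫_{t^{−2/α}}^∞ du/(1 + u^{α/2}) ≤ ρ·(1 + t)^{2/α}` with
`ρ := (2π/α)/sin(2π/α)`. -/
theorem pfaff_transformation_bound (α t : ℝ) (hα : 2 < α) (ht : 0 < t) :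
    1 + t ^ (2 / α) * ∫ u in Set.Ioi (t ^ (-(2 / α))), 1 / (1 + u ^ (α / 2)) ≤
      (2 * π / α) / Real.sin (2 * π / α) * (1 + t) ^ (2 / α) := by
  have hα0 : (0:ℝ) < α := by linarith
  set δ : ℝ := 2 / α with hδdef
  have hδ0 : 0 < δ := by positivity
  have hδ1 : δ < 1 := by rw [hδdef, div_lt_one hα0]; linarith
  have hc : (0:ℝ) < 1 + t := by linarith
  have hexp : α / 2 = δ⁻¹ := by rw [hδdef, inv_div]
  have hpi : 2 * π / α = π * δ := by rw [hδdef]; ring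
  rw [hexp, hpi, tail_subst δ t hδ0 ht]
  -- RHS as integral
  have hRHS : π * δ / Real.sin (π * δ) * (1 + t) ^ δ
      = δ * (1 + t) * ∫ y in Ioi (0:ℝ), y ^ (δ - 1) / ((1 + t) + y) := by
    rw [int_rpow_div_c_add δ hδ0 hδ1 hc]
    have h1 : (1 + t) ^ δ = (1 + t) * (1 + t) ^ (δ - 1) := by
      rw [mul_comm, ← rpow_add_one hc.ne' (δ - 1)]; ring_nf
    rw [h1]; ring
  rw [hRHS]
  have hI1 : IntegrableOn (fun y : ℝ => y ^ (δ - 1) / ((1 + t) + y)) (Ioc 0 1) :=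
    integrableOn_Ioc_rpow_div δ (1 + t) hδ0 hc
  have hI2 : IntegrableOn (fun y : ℝ => y ^ (δ - 1) / ((1 + t) + y)) (Ioi 1) :=
    integrableOn_Ioi_rpow_div δ (1 + t) hδ1 hc
  rw [← Ioc_union_Ioi_eq_Ioi (zero_le_one), setIntegral_union (Ioc_disjoint_Ioi le_rfl)
    measurableSet_Ioi hI1 hI2]
  simp only [mul_div_assoc]
  rw [MeasureTheory.integral_const_mul]
  set A := ∫ y in Ioc (0:ℝ) 1, y ^ (δ - 1) / ((1 + t) + y) with hA
  set B := ∫ y in Ioi (1:ℝ), y ^ (δ - 1) / ((1 + t) + y) with hB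
  set C := ∫ y in Ioi (1:ℝ), y ^ (δ - 1) / (t + y) with hC
  set K1 := ∫ y in Ioc (0:ℝ) 1, y ^ δ / ((1 + t) + y) with hK1
  set K2 := ∫ y in Ioi (1:ℝ), y ^ δ / ((t + y) * ((1 + t) + y)) with hK2
  set L := Real.log (2 + t) - Real.log (1 + t) with hL
  have hrpowInt : IntegrableOn (fun y : ℝ => y ^ (δ - 1)) (Ioc (0:ℝ) 1) := by
    have := intervalIntegrable_rpow' (a := 0) (b := 1) (r := δ - 1) (by linarith)
    rwa [intervalIntegrable_iff_integrableOn_Ioc_of_le zero_le_one] at this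
  have hCint : IntegrableOn (fun y : ℝ => y ^ (δ - 1) / (t + y)) (Ioi 1) :=
    integrableOn_Ioi_rpow_div δ t hδ1 ht
  -- key1 : 1 = δ*(1+t)*A + δ*K1
  have key1 : K1 + (1 + t) * A = 1 / δ := by
    rw [hK1, hA, ← MeasureTheory.integral_const_mul, ← MeasureTheory.integral_add
      (integrableOn_Ioc_rpow_div' δ (1 + t) hδ0.le hc) (hI1.const_mul (1 + t)),
      ← int_Ioc_rpow' δ hδ0]
    refine setIntegral_congr_fun measurableSet_Ioc (fun y hy => ?_)
    have hy0 : (0:ℝ) < y := hy.1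
    have hcy : (0:ℝ) < (1 + t) + y := by linarith
    have hyδ : y ^ δ = y ^ (δ - 1) * y := by
      rw [← rpow_add_one hy0.ne']; ring_nf
    rw [hyδ]
    field_simp
    ring
  have key2 : (1 + t) * B = t * C + K2 := by
    rw [hB, hC, hK2, ← MeasureTheory.integral_const_mul, ← MeasureTheory.integral_const_mul,
      ← MeasureTheory.integral_add (hCint.const_mul t) (integrableOn_Ioi_prod δ t hδ1 ht)]
    refine setIntegral_congr_fun measurableSet_Ioi (fun y hy => ?_)
    have hy1 : (1:ℝ) < y := hy
    have hy0 : (0:ℝ) < y := lt_trans one_pos hy1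
    have h1 : (0:ℝ) < t + y := by linarith
    have h2 : (0:ℝ) < (1 + t) + y := by linarith
    have hyδ : y ^ δ = y ^ (δ - 1) * y := by
      rw [← rpow_add_one hy0.ne']; ring_nf
    rw [hyδ]
    field_simp
    ring
  -- K1 ≤ L
  have ineq1 : K1 ≤ L := by
    have hmono : K1 ≤ ∫ y in Ioc (0:ℝ) 1, 1 / ((1 + t) + y) := by
      refine setIntegral_mono_on (integrableOn_Ioc_rpow_div' δ (1 + t) hδ0.le hc)
        ?_ measurableSet_Ioc (fun y hy => ?_)
      · have h0 : (0:ℝ) ≤ 0 := le_refl 0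
        have := integrableOn_Ioc_rpow_div' 0 (1 + t) h0 hc
        simpa [Real.rpow_zero] using this
      · have hy0 : (0:ℝ) < y := hy.1
        have hcy : (0:ℝ) < (1 + t) + y := by linarith
        gcongr
        exact rpow_le_one hy0.le hy.2 hδ0.le
    calc K1 ≤ _ := hmono
    _ = Real.log ((1 + t) + 1) - Real.log (1 + t) := int_Ioc_inv' (1 + t) hc
    _ = L := by rw [hL, show (1 + t) + 1 = 2 + t by ring]
  -- L ≤ K2
  have ineq2 : L ≤ K2 := by
    have : L = ∫ y in Ioi (1:ℝ), ((t + y)⁻¹ - (1 + t + y)⁻¹) := (int_Ioi_diff' t ht).symm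
    rw [this, hK2]
    refine setIntegral_mono_on (integrableOn_diff_Ioi t ht)
      (integrableOn_Ioi_prod δ t hδ1 ht) measurableSet_Ioi (fun y hy => ?_)
    have hy1 : (1:ℝ) < y := hy
    have hy0 : (0:ℝ) < y := lt_trans one_pos hy1
    have h1 : (0:ℝ) < t + y := by linarith
    have h2 : (0:ℝ) < 1 + t + y := by linarith
    have hd : (t + y)⁻¹ - (1 + t + y)⁻¹ = 1 / ((t + y) * (1 + t + y)) := by
      field_simp
      ring
    rw [hd, show (1 + t) + y = 1 + t + y by ring]
    gcongr
    exact Real.one_le_rpow hy1.le hδ0.le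
  -- assemble
  have e1 : 1 = δ * (1 + t) * A + δ * K1 := by
    calc (1:ℝ) = δ * (1 / δ) := by field_simp
    _ = δ * (K1 + (1 + t) * A) := by rw [key1]
    _ = δ * (1 + t) * A + δ * K1 := by ring
  have e2 : δ * ((1 + t) * B) = δ * (t * C) + δ * K2 := by rw [key2]; ring
  have h3 : δ * K1 ≤ δ * L := mul_le_mul_of_nonneg_left ineq1 hδ0.le
  have h4 : δ * L ≤ δ * K2 := mul_le_mul_of_nonneg_left ineq2 hδ0.le
  nlinarith [e1, e2, h3, h4]
end

section
/- (Key integral inequality of Proposition 2, case d ≤ R_I.) For every real α > 2, every s > 0 and every a > 0, ∫_{a}^{∞} 2·s·y^{1−α} / (1 + s·y^{−α}) dy ≤ a² · ( ρ·(1 + s·a^{−α})^{2/α} − 1 ), where ρ := (2π/α)/sin(2π/α). -/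
open Real MeasureTheory Set Filter

lemma real_beta_integral {u v : ℝ} (hu : 0 < u) (hv : 0 < v) :
    ∫ x in Ioo (0:ℝ) 1, x ^ (u - 1) * (1 - x) ^ (v - 1) =
      Real.Gamma u * Real.Gamma v / Real.Gamma (u + v) := by
  have key := Complex.Gamma_mul_Gamma_eq_betaIntegral (s := (u:ℂ)) (t := (v:ℂ))
    (by simpa using hu) (by simpa using hv)
  have hbeta : Complex.betaIntegral u v =
      ((∫ x in Ioo (0:ℝ) 1, x ^ (u - 1) * (1 - x) ^ (v - 1) : ℝ) : ℂ) := by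
    rw [Complex.betaIntegral, intervalIntegral.integral_of_le zero_le_one,
      MeasureTheory.integral_Ioc_eq_integral_Ioo]
    refine Eq.trans (setIntegral_congr_fun measurableSet_Ioo (fun x hx => ?_))
      (integral_ofReal (f := fun x : ℝ => x ^ (u - 1) * (1 - x) ^ (v - 1)))
    show (x:ℂ) ^ ((u:ℂ) - 1) * (1 - (x:ℂ)) ^ ((v:ℂ) - 1) =
      ((x ^ (u - 1) * (1 - x) ^ (v - 1) : ℝ) : ℂ)
    rw [show ((x ^ (u - 1) * (1 - x) ^ (v - 1) : ℝ) : ℂ) =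
        ((x ^ (u-1) : ℝ) : ℂ) * (((1-x) ^ (v-1) : ℝ) : ℂ) from by push_cast; ring,
      Complex.ofReal_cpow hx.1.le,
      Complex.ofReal_cpow (by linarith [hx.2] : (0:ℝ) ≤ 1 - x)]
    push_cast
    ring
  rw [hbeta] at key
  have hG : ∀ w : ℝ, Complex.Gamma (w : ℂ) = (Real.Gamma w : ℂ) := fun w => Complex.Gamma_ofReal w
  rw [hG u, hG v] at key
  have h2 : ((u:ℂ) + v) = ((u + v : ℝ) : ℂ) := by push_cast; ring
  rw [h2, hG (u+v)] at key
  have key2 : Real.Gamma u * Real.Gamma v =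
      Real.Gamma (u + v) * ∫ x in Ioo (0:ℝ) 1, x ^ (u - 1) * (1 - x) ^ (v - 1) := by
    exact_mod_cast key
  have hGuv : Real.Gamma (u + v) ≠ 0 := (Real.Gamma_pos_of_pos (by linarith)).ne'
  rw [key2]
  field_simp

lemma integral_inv_one_add_rpow {β : ℝ} (hβ : 1 < β) :
    ∫ w in Ioi (0:ℝ), (1 + w ^ β)⁻¹ = (π / β) / sin (π / β) := by
  have hβ0 : (0:ℝ) < β := by linarith
  set c : ℝ := 1 / β with hc
  have hc0 : 0 < c := by positivity
  have hc1 : c < 1 := by rw [hc]; rw [div_lt_one hβ0]; exact hβ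
  set f : ℝ → ℝ := fun x => (x⁻¹ - 1) ^ c with hf
  set f' : ℝ → ℝ := fun x => c * (x⁻¹ - 1) ^ (c - 1) * (-(x ^ 2)⁻¹) with hf'
  have hmem : ∀ x ∈ Ioo (0:ℝ) 1, 0 < x⁻¹ - 1 := by
    intro x hx
    have : 1 < x⁻¹ := (one_lt_inv₀ hx.1).mpr hx.2
    linarith
  have hderiv : ∀ x ∈ Ioo (0:ℝ) 1, HasDerivWithinAt f (f' x) (Ioo (0:ℝ) 1) x := by
    intro x hx
    have h1 : HasDerivAt (fun y : ℝ => y⁻¹ - 1) (-(x ^ 2)⁻¹) x :=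
      (hasDerivAt_inv hx.1.ne').sub_const 1
    have h2 : HasDerivAt (fun t : ℝ => t ^ c) (c * (x⁻¹ - 1) ^ (c - 1)) (x⁻¹ - 1) :=
      Real.hasDerivAt_rpow_const (Or.inl (hmem x hx).ne')
    exact (h2.comp x h1).hasDerivWithinAt
  have himg : f '' Ioo 0 1 = Ioi 0 := by
    ext t
    constructor
    · rintro ⟨x, hx, rfl⟩
      exact rpow_pos_of_pos (hmem x hx) c
    · intro ht
      have ht' : (0:ℝ) < t := ht
      refine ⟨(1 + t ^ β)⁻¹, ⟨by positivity, ?_⟩, ?_⟩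
      · rw [inv_lt_one_iff₀]
        right
        nlinarith [rpow_pos_of_pos ht' β]
      · have h1 : ((1 + t ^ β)⁻¹ : ℝ)⁻¹ - 1 = t ^ β := by
          rw [inv_inv]; ring
        rw [hf]
        simp only [h1]
        rw [← rpow_mul ht'.le, hc, mul_one_div, div_self hβ0.ne', rpow_one]
  have hinj : InjOn f (Ioo (0:ℝ) 1) := by
    intro x hx y hy hxy
    have h1 : ((x⁻¹ - 1) ^ c) ^ β = ((y⁻¹ - 1) ^ c) ^ β := congrArg (· ^ β) hxy
    rw [← rpow_mul (hmem x hx).le, ← rpow_mul (hmem y hy).le, hc, one_div_mul_cancel hβ0.ne',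
      rpow_one, rpow_one] at h1
    have h2 : x⁻¹ = y⁻¹ := by linarith
    have := congrArg (·⁻¹) h2
    simpa using this
  have key := MeasureTheory.integral_image_eq_integral_abs_deriv_smul measurableSet_Ioo hderiv
    hinj (fun w => (1 + w ^ β)⁻¹)
  rw [himg] at key
  rw [key]
  have hcong : ∀ x ∈ Ioo (0:ℝ) 1, |f' x| • ((1 + f x ^ β)⁻¹) =
      β⁻¹ * (x ^ ((1 - c) - 1) * (1 - x) ^ (c - 1)) := by
    intro x hx
    have hx0 := hx.1
    have hx1' : (0:ℝ) ≤ 1 - x := by linarith [hx.2]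
    have hfxβ : f x ^ β = x⁻¹ - 1 := by
      rw [hf]
      show ((x⁻¹ - 1) ^ c) ^ β = x⁻¹ - 1
      rw [← rpow_mul (hmem x hx).le, hc, one_div_mul_cancel hβ0.ne', rpow_one]
    have hgf : (1 + f x ^ β)⁻¹ = x := by rw [hfxβ]; field_simp; ring
    have hf'x : f' x = -(c * (x⁻¹ - 1) ^ (c - 1) * (x ^ 2)⁻¹) := by rw [hf']; ring
    have habs : |f' x| = c * (x⁻¹ - 1) ^ (c - 1) * (x ^ 2)⁻¹ := by
      rw [hf'x, abs_neg, abs_of_nonneg (mul_nonneg (mul_nonneg hc0.le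
        (rpow_pos_of_pos (hmem x hx) _).le) (by positivity))]
    rw [smul_eq_mul, hgf, habs]
    have hsub : x⁻¹ - 1 = (1 - x) / x := by field_simp
    rw [hsub, div_rpow hx1' hx0.le, div_eq_mul_inv ((1-x) ^ (c-1)), ← rpow_neg hx0.le]
    have hx2 : ((x:ℝ) ^ 2)⁻¹ = x ^ (-2 : ℝ) := by
      rw [← rpow_natCast x 2, ← rpow_neg hx0.le]; norm_num
    rw [hx2]
    have hmerge : x ^ (-(c-1)) * x ^ (-2:ℝ) * x = x ^ ((1 - c) - 1) := by
      rw [← rpow_add hx0]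
      nth_rewrite 2 [← rpow_one x]
      rw [← rpow_add hx0]
      ring_nf
    linear_combination c * (1-x) ^ (c-1) * hmerge
  rw [setIntegral_congr_fun measurableSet_Ioo hcong, integral_const_mul,
    real_beta_integral (by linarith : (0:ℝ) < 1 - c) hc0,
    show (1 - c) + c = 1 by ring, Real.Gamma_one, div_one, mul_comm (Real.Gamma (1-c)),
    Real.Gamma_mul_Gamma_one_sub c, hc, mul_one_div]
  ring

section aux
variable {α s : ℝ}

lemma ieub_cont (hα0 : 0 < α) (hs : 0 < s) :
    ContinuousOn (fun y : ℝ => 2 * s * y / (y ^ α + s)) (Ici 0) := by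
  apply ContinuousOn.div
  · exact (continuousOn_const.mul continuousOn_id)
  · exact (continuousOn_id.rpow_const (fun y _ => Or.inr hα0.le)).add continuousOn_const
  · intro y hy
    have : (0:ℝ) ≤ y ^ α := rpow_nonneg hy α
    positivity

lemma ieub_integrableOn (hα : 2 < α) (hs : 0 < s) :
    IntegrableOn (fun y : ℝ => 2 * s * y / (y ^ α + s)) (Ioi 0) := by
  have hα0 : (0:ℝ) < α := by linarith
  rw [← Ioc_union_Ioi_eq_Ioi (zero_le_one : (0:ℝ) ≤ 1), integrableOn_union]
  constructor
  · exact (((ieub_cont hα0 hs).mono (Icc_subset_Ici_self)).integrableOn_Icc).mono_set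
      Ioc_subset_Icc_self
  · have hbase : IntegrableOn (fun y : ℝ => 2 * s * y ^ (1 - α)) (Ioi 1) :=
      (integrableOn_Ioi_rpow_of_lt (by linarith : 1 - α < -1) one_pos).const_mul (2 * s)
    refine MeasureTheory.Integrable.mono hbase ?_ ?_
    · exact ((ieub_cont hα0 hs).mono (fun y (hy : y ∈ Ioi 1) => le_of_lt (by
        simpa using lt_trans zero_lt_one (mem_Ioi.mp hy)))).aestronglyMeasurable measurableSet_Ioi
    · rw [ae_restrict_iff' measurableSet_Ioi]
      filter_upwards with y hy
      have hy0 : (0:ℝ) < y := lt_trans zero_lt_one hy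
      have hyα : (0:ℝ) < y ^ α := rpow_pos_of_pos hy0 α
      have h1 : 2 * s * y / (y ^ α + s) ≤ 2 * s * y ^ (1 - α) := by
        rw [rpow_sub hy0, rpow_one, mul_div_assoc]
        gcongr
        linarith
      have h2 : (0:ℝ) ≤ 2 * s * y / (y ^ α + s) := by positivity
      have h3 : (0:ℝ) ≤ 2 * s * y ^ (1 - α) := by positivity
      rw [norm_of_nonneg h2, norm_of_nonneg h3]
      exact h1

lemma ieub_integral_value (hα : 2 < α) (hs : 0 < s) :
    ∫ y in Ioi (0:ℝ), 2 * s * y / (y ^ α + s) =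
      s ^ (2 / α) * ((2 * π / α) / sin (2 * π / α)) := by
  have hα0 : (0:ℝ) < α := by linarith
  have hβ : (1:ℝ) < α / 2 := by linarith
  have hJ := integral_inv_one_add_rpow hβ
  -- step 1 : ∫ x in Ioi 0, 2 * x * (1 + x ^ α)⁻¹ = (π/(α/2))/sin (π/(α/2))
  have step1 : ∫ x in Ioi (0:ℝ), 2 * x * (1 + x ^ α)⁻¹ = (π / (α/2)) / sin (π / (α/2)) := by
    have h := integral_comp_rpow_Ioi_of_pos (g := fun w => (1 + w ^ (α/2))⁻¹)
      (p := 2) two_pos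
    simp only [smul_eq_mul] at h
    rw [← hJ, ← h]
    refine setIntegral_congr_fun measurableSet_Ioi (fun x hx => ?_)
    have hx0 : (0:ℝ) < x := hx
    have h2 : (x ^ (2:ℝ)) ^ (α/2) = x ^ α := by
      rw [← rpow_mul hx0.le]
      congr 1
      ring
    rw [h2, show (2:ℝ)-1 = (1:ℝ) by norm_num, rpow_one]
  -- step 2 : scaling
  set b : ℝ := s ^ α⁻¹ with hbdef
  have hb : (0:ℝ) < b := rpow_pos_of_pos hs _
  have hbα : b ^ α = s := by
    rw [hbdef, ← rpow_mul hs.le, inv_mul_cancel₀ hα0.ne', rpow_one]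
  have h := integral_comp_mul_left_Ioi (g := fun y => 2 * s * y / (y ^ α + s)) 0 hb
  simp only [smul_eq_mul, mul_zero] at h
  have hcomp : ∫ x in Ioi (0:ℝ), 2 * s * (b * x) / ((b * x) ^ α + s) =
      b * ∫ x in Ioi (0:ℝ), 2 * x * (1 + x ^ α)⁻¹ := by
    rw [← integral_const_mul]
    refine setIntegral_congr_fun measurableSet_Ioi (fun x hx => ?_)
    have hx0 : (0:ℝ) < x := hx
    have hxα : (0:ℝ) < x ^ α := rpow_pos_of_pos hx0 α
    rw [mul_rpow hb.le hx0.le, hbα]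
    rw [div_eq_iff (by positivity : (0:ℝ) < s * x ^ α + s).ne']
    field_simp
    ring
  rw [hcomp, step1] at h
  have hfin := congrArg (fun z => b * z) h
  simp only [← mul_assoc, mul_inv_cancel₀ hb.ne', one_mul] at hfin
  rw [← hfin, show b * b = s ^ (2/α) from by
    rw [hbdef, ← rpow_add hs]; congr 1; field_simp; ring,
    show π / (α/2) = 2 * π / α from by ring]
end aux

/-- Key integral inequality of Proposition 2 (case `d ≤ R_I`):
`∫_a^∞ 2·s·y^{1−α}/(1 + s·y^{−α}) dy ≤ a²·(ρ·(1 + s·a^{−α})^{2/α} − 1)` with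
`ρ := (2π/α)/sin(2π/α)`. -/
theorem interference_exponent_upper_bound (α s a : ℝ) (hα : 2 < α) (hs : 0 < s)
    (ha : 0 < a) :
    ∫ y in Set.Ioi a, 2 * s * y ^ (1 - α) / (1 + s * y ^ (-α)) ≤
      a ^ 2 * ((2 * π / α) / Real.sin (2 * π / α) * (1 + s * a ^ (-α)) ^ (2 / α) - 1) := by
  have hα0 : (0:ℝ) < α := by linarith
  set ρ : ℝ := (2 * π / α) / Real.sin (2 * π / α) with hρdef
  set g : ℝ → ℝ := fun y => 2 * s * y / (y ^ α + s) with hg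
  have hρ1 : (1:ℝ) ≤ ρ := by
    have hx1 : (0:ℝ) < 2 * π / α := by positivity
    have hx2 : 2 * π / α < π := by
      rw [div_lt_iff₀ hα0]
      nlinarith [pi_pos]
    have hsin : (0:ℝ) < sin (2 * π / α) := sin_pos_of_pos_of_lt_pi hx1 hx2
    rw [hρdef, le_div_iff₀ hsin, one_mul]
    exact (sin_lt hx1).le
  -- replace the integrand by g on Ioi a
  have hcongr : ∫ y in Ioi a, 2 * s * y ^ (1 - α) / (1 + s * y ^ (-α)) = ∫ y in Ioi a, g y := by
    refine setIntegral_congr_fun measurableSet_Ioi (fun y hy => ?_)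
    have hy0 : (0:ℝ) < y := lt_trans ha hy
    have hyα : (0:ℝ) < y ^ α := rpow_pos_of_pos hy0 α
    rw [hg]
    show 2 * s * y ^ (1 - α) / (1 + s * y ^ (-α)) = 2 * s * y / (y ^ α + s)
    rw [rpow_sub hy0, rpow_one, rpow_neg hy0.le]
    rw [div_eq_div_iff (by positivity) (by positivity)]
    field_simp
  rw [hcongr]
  -- rewrite the RHS
  have hRHS : a ^ 2 * (ρ * (1 + s * a ^ (-α)) ^ (2 / α) - 1) =
      ρ * (a ^ α + s) ^ (2 / α) - a ^ 2 := by
    have h1 : a ^ α + s = a ^ α * (1 + s * a ^ (-α)) := by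
      rw [rpow_neg ha.le]
      have : (0:ℝ) < a ^ α := rpow_pos_of_pos ha α
      field_simp
    have h2 : (a ^ α + s) ^ (2/α) = a ^ 2 * (1 + s * a ^ (-α)) ^ (2/α) := by
      rw [h1, mul_rpow (rpow_pos_of_pos ha α).le (by positivity), ← rpow_mul ha.le]
      rw [show α * (2/α) = 2 from by field_simp, show a ^ (2:ℝ) = a ^ (2:ℕ) from by
        rw [← rpow_natCast a 2]; norm_num]
    rw [h2]; ring
  rw [hRHS]
  -- split the full integral
  have hInt : IntegrableOn g (Ioi 0) := ieub_integrableOn hα hs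
  have hIntIoc : IntegrableOn g (Ioc 0 a) := hInt.mono_set Ioc_subset_Ioi_self
  have hIntIoi : IntegrableOn g (Ioi a) := hInt.mono_set (Ioi_subset_Ioi ha.le)
  have hsplit : ∫ y in Ioi (0:ℝ), g y = (∫ y in Ioc 0 a, g y) + ∫ y in Ioi a, g y := by
    rw [← setIntegral_union (Ioc_disjoint_Ioi le_rfl) measurableSet_Ioi hIntIoc hIntIoi,
      Ioc_union_Ioi_eq_Ioi ha.le]
  have hvalue : ∫ y in Ioi (0:ℝ), g y = s ^ (2/α) * ρ := ieub_integral_value hα hs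
  -- monotone function H
  set H : ℝ → ℝ := fun x => ρ * (x ^ α + s) ^ (2/α) - x ^ 2 + ∫ t in (0:ℝ)..x, g t with hH
  have hIccInt : IntegrableOn g (Icc 0 a) :=
    ((ieub_cont hα0 hs).mono Icc_subset_Ici_self).integrableOn_Icc
  have hHcont : ContinuousOn H (Icc 0 a) := by
    refine ContinuousOn.add (ContinuousOn.sub (continuousOn_const.mul ?_)
      (continuous_pow 2).continuousOn) ?_
    · exact ((continuousOn_id.rpow_const (fun x _ => Or.inr hα0.le)).add
        continuousOn_const).rpow_const (fun x hx => Or.inl (by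
          have : (0:ℝ) ≤ x ^ α := rpow_nonneg hx.1 α
          exact (add_pos_of_nonneg_of_pos this hs).ne'))
    · have := intervalIntegral.continuousOn_primitive_interval
        (f := g) (μ := volume) (a := 0) (b := a) (by rwa [uIcc_of_le ha.le])
      rwa [uIcc_of_le ha.le] at this
  have hHderiv : ∀ x ∈ Ioo 0 a, HasDerivAt H
      (ρ * ((2/α) * (x ^ α + s) ^ (2/α - 1) * (α * x ^ (α - 1))) - 2 * x + g x) x := by
    intro x hx
    have hx0 : (0:ℝ) < x := hx.1
    have hden : (0:ℝ) < x ^ α + s := by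
      have : (0:ℝ) < x ^ α := rpow_pos_of_pos hx0 α
      positivity
    have hd1 : HasDerivAt (fun x : ℝ => (x ^ α + s) ^ (2/α))
        ((2/α) * (x ^ α + s) ^ (2/α - 1) * (α * x ^ (α - 1))) x := by
      have hinner : HasDerivAt (fun x : ℝ => x ^ α + s) (α * x ^ (α - 1)) x :=
        (Real.hasDerivAt_rpow_const (Or.inl hx0.ne')).add_const s
      have houter : HasDerivAt (fun t : ℝ => t ^ (2/α))
          ((2/α) * (x ^ α + s) ^ (2/α - 1)) (x ^ α + s) :=
        Real.hasDerivAt_rpow_const (Or.inl hden.ne')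
      exact houter.comp x hinner
    have hd2 : HasDerivAt (fun x : ℝ => ∫ t in (0:ℝ)..x, g t) (g x) x := by
      refine intervalIntegral.integral_hasDerivAt_right ?_ ?_ ?_
      · exact (hIccInt.mono_set (by
          rw [uIcc_of_le hx0.le]
          exact Icc_subset_Icc le_rfl hx.2.le)).intervalIntegrable
      · exact ((ieub_cont hα0 hs).mono Ioi_subset_Ici_self).stronglyMeasurableAtFilter
          isOpen_Ioi _ hx0
      · exact ((ieub_cont hα0 hs).mono Ioi_subset_Ici_self).continuousAt (Ioi_mem_nhds hx0)
    have hpow : HasDerivAt (fun x : ℝ => x ^ 2) (2 * x) x := by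
      simpa using hasDerivAt_pow 2 x
    exact ((hd1.const_mul ρ).sub hpow).add hd2
  have hderiv_nonneg : ∀ x ∈ Ioo 0 a,
      0 ≤ ρ * ((2/α) * (x ^ α + s) ^ (2/α - 1) * (α * x ^ (α - 1))) - 2 * x + g x := by
    intro x hx
    have hx0 : (0:ℝ) < x := hx.1
    have hxα : (0:ℝ) < x ^ α := rpow_pos_of_pos hx0 α
    have hden : (0:ℝ) < x ^ α + s := by positivity
    have hB : x ^ 2 ≤ (x ^ α + s) ^ (2/α) := by
      calc x ^ 2 = (x ^ α) ^ (2/α) := by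
            rw [← rpow_mul hx0.le, show α * (2/α) = 2 from by field_simp,
              show x ^ (2:ℝ) = x ^ (2:ℕ) from by rw [← rpow_natCast x 2]; norm_num]
        _ ≤ (x ^ α + s) ^ (2/α) := by
            apply rpow_le_rpow hxα.le (by linarith) (by positivity)
    have hkey : x ^ α * x ≤ ρ * (x ^ (α-1) * (x ^ α + s) ^ (2/α)) := by
      have e1 : x ^ (α-1) * x ^ 2 = x ^ α * x := by
        rw [show (x:ℝ) ^ (2:ℕ) = x ^ (2:ℝ) from by rw [← rpow_natCast x 2]; norm_num,
          ← rpow_add hx0, show α - 1 + 2 = α + 1 from by ring, rpow_add hx0, rpow_one]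
      calc x ^ α * x = x ^ (α-1) * x ^ 2 := e1.symm
        _ ≤ x ^ (α-1) * (x ^ α + s) ^ (2/α) :=
            mul_le_mul_of_nonneg_left hB (rpow_nonneg hx0.le _)
        _ ≤ ρ * (x ^ (α-1) * (x ^ α + s) ^ (2/α)) := by
            apply le_mul_of_one_le_left (mul_nonneg (rpow_nonneg hx0.le _)
              (rpow_nonneg hden.le _)) hρ1
    have hVeq : ρ * ((2/α) * (x ^ α + s) ^ (2/α - 1) * (α * x ^ (α - 1))) - 2 * x + g x =
        2 * (ρ * (x ^ (α-1) * (x ^ α + s) ^ (2/α)) - x ^ α * x) / (x ^ α + s) := by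
      rw [hg]
      show ρ * ((2/α) * (x ^ α + s) ^ (2/α - 1) * (α * x ^ (α - 1))) - 2 * x
          + 2 * s * x / (x ^ α + s) = _
      rw [show (x ^ α + s) ^ (2/α - 1) = (x ^ α + s) ^ (2/α) / (x ^ α + s) from by
        rw [rpow_sub hden, rpow_one]]
      field_simp
      ring
    rw [hVeq]
    apply div_nonneg _ hden.le
    linarith
  -- monotonicity of H on [0, a]
  have hmono : MonotoneOn H (Icc 0 a) := by
    apply monotoneOn_of_deriv_nonneg (convex_Icc 0 a) hHcont
    · intro x hx
      rw [interior_Icc] at hx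
      exact ((hHderiv x hx).differentiableAt).differentiableWithinAt
    · intro x hx
      rw [interior_Icc] at hx
      rw [(hHderiv x hx).deriv]
      exact hderiv_nonneg x hx
  have hH0 : H 0 = ρ * s ^ (2/α) := by
    rw [hH]
    show ρ * ((0:ℝ) ^ α + s) ^ (2/α) - (0:ℝ) ^ 2 + ∫ t in (0:ℝ)..(0:ℝ), g t = ρ * s ^ (2/α)
    rw [zero_rpow hα0.ne', zero_add, intervalIntegral.integral_same]
    ring
  have hHa : H a = ρ * (a ^ α + s) ^ (2/α) - a ^ 2 + ∫ y in Ioc 0 a, g y := by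
    rw [hH]
    show ρ * (a ^ α + s) ^ (2/α) - a ^ 2 + ∫ t in (0:ℝ)..a, g t = _
    rw [intervalIntegral.integral_of_le ha.le]
  have hle : H 0 ≤ H a := hmono (left_mem_Icc.mpr ha.le) (right_mem_Icc.mpr ha.le) ha.le
  rw [hH0, hHa] at hle
  have : ∫ y in Ioi a, g y = s ^ (2/α) * ρ - ∫ y in Ioc 0 a, g y := by
    rw [← hvalue, hsplit]; ring
  rw [this]
  linarith
end

section
/- (Exponent limit underlying Remark 2, item 2.) Let d, P₁, P₂, θ > 0 and α > 2, and define g(y) := P₁·θ·d^α·y^{1−α} / (P₂ + P₁·θ·d^α·y^{−α}) for y > 0. Then, as R → 0⁺, the interference exponent of the access probability formula (2), namely E(R) := ∫_{R+d}^{∞} 2π·g(y) dy + ∫_{|R−d|}^{R+d} 2·arccos( (R² − d² − y²)/(2·d·y) )·g(y) dy + ∫_{max(0, R−d)}^{|R−d|} 2π·g(y) dy, converges to ∫_{0}^{∞} 2π·g(y) dy = π·(P₁·θ·d^α/P₂)^{2/α}·∫_{0}^{∞} 1/(1 + u^{α/2}) du. (Hence the access probability becomes independent of the measured interference I as I → ∞.)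 -/
open Real MeasureTheory Filter Set

/-- Exponent limit underlying Remark 2, item 2: as the empty-ball radius `R → 0⁺`, the
interference exponent `E(R)` of the access probability formula (2) converges to the
full-plane integral `∫_0^∞ 2π·g(y) dy`, which equals
`π·(P₁θd^α/P₂)^{2/α}·∫_0^∞ du/(1 + u^{α/2})`. -/
theorem interference_exponent_tendsto_full_plane (d P₁ P₂ θ α : ℝ) (hd : 0 < d)
    (hP₁ : 0 < P₁) (hP₂ : 0 < P₂) (hθ : 0 < θ) (hα : 2 < α)
    (g : ℝ → ℝ)
    (hg : ∀ y : ℝ, g y = P₁ * θ * d ^ α * y ^ (1 - α) / (P₂ + P₁ * θ * d ^ α * y ^ (-α))) :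
    Tendsto (fun R : ℝ =>
        (∫ y in Set.Ioi (R + d), 2 * π * g y) +
          (∫ y in Set.Ioc |R - d| (R + d),
            2 * Real.arccos ((R ^ 2 - d ^ 2 - y ^ 2) / (2 * d * y)) * g y) +
          (∫ y in Set.Ioc (max 0 (R - d)) |R - d|, 2 * π * g y))
      (nhdsWithin 0 (Set.Ioi 0)) (nhds (∫ y in Set.Ioi (0 : ℝ), 2 * π * g y)) ∧
    ∫ y in Set.Ioi (0 : ℝ), 2 * π * g y =
      π * (P₁ * θ * d ^ α / P₂) ^ (2 / α) * ∫ u in Set.Ioi (0 : ℝ), 1 / (1 + u ^ (α / 2)) := by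
  have hα0 : (0:ℝ) < α := by linarith
  set C := P₁ * θ * d ^ α with hCdef
  have hC0 : 0 < C := by
    have hdα : (0:ℝ) < d ^ α := Real.rpow_pos_of_pos hd α
    positivity
  set g₀ : ℝ → ℝ := fun y => C * y / (P₂ * y ^ α + C) with hg₀def
  have hden : ∀ y : ℝ, 0 ≤ y → 0 < P₂ * y ^ α + C := by
    intro y hy
    have : 0 ≤ y ^ α := Real.rpow_nonneg hy α
    positivity
  have hgg₀ : ∀ y ∈ Ioi (0:ℝ), g y = g₀ y := by
    intro y hy
    have hy0 : (0:ℝ) < y := hy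
    have hyα : (0:ℝ) < y ^ α := Real.rpow_pos_of_pos hy0 α
    have h1 : y ^ (1 - α) = y * (y ^ α)⁻¹ := by
      rw [sub_eq_add_neg, Real.rpow_add hy0, Real.rpow_one, Real.rpow_neg hy0.le]
    have h2 : y ^ (-α) = (y ^ α)⁻¹ := Real.rpow_neg hy0.le α
    have hd2 : P₂ * y ^ α + C ≠ 0 := (hden y hy0.le).ne'
    rw [hg y, h1, h2]
    show C * (y * (y ^ α)⁻¹) / (P₂ + C * (y ^ α)⁻¹) = C * y / (P₂ * y ^ α + C)
    field_simp
  have hg₀nonneg : ∀ y : ℝ, 0 ≤ y → 0 ≤ g₀ y := fun y hy =>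
    div_nonneg (mul_nonneg hC0.le hy) (hden y hy).le
  have hg₀le : ∀ y : ℝ, 0 ≤ y → g₀ y ≤ y := by
    intro y hy
    have h1 : C * y / (P₂ * y ^ α + C) ≤ C * y / C := by
      gcongr
      have : 0 ≤ y ^ α := Real.rpow_nonneg hy α
      nlinarith
    calc g₀ y ≤ C * y / C := h1
      _ = y := mul_div_cancel_left₀ y hC0.ne'
  -- continuity of g₀ on [0, ∞)
  have hrpow_cont : Continuous fun y : ℝ => y ^ α := Real.continuous_rpow_const hα0.le
  have hcont : ContinuousOn g₀ (Ici 0) := by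
    apply ContinuousOn.div
    · exact (continuous_const.mul continuous_id).continuousOn
    · exact ((continuous_const.mul hrpow_cont).add continuous_const).continuousOn
    · exact fun y hy => (hden y hy).ne'
  -- integrability of g₀ on (0, ∞)
  have hint1 : IntegrableOn g₀ (Ioc (0:ℝ) 1) :=
    ((hcont.mono Icc_subset_Ici_self).integrableOn_Icc).mono_set Ioc_subset_Icc_self
  have hbound2 : ∀ y ∈ Ioi (1:ℝ), ‖g₀ y‖ ≤ C / P₂ * y ^ (1 - α) := by
    intro y hy
    have hy1 : (1:ℝ) < y := hy
    have hy0 : (0:ℝ) < y := by linarith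
    have hyα : (0:ℝ) < y ^ α := Real.rpow_pos_of_pos hy0 α
    rw [Real.norm_of_nonneg (hg₀nonneg y hy0.le)]
    have h1 : g₀ y ≤ C * y / (P₂ * y ^ α) := by
      show C * y / (P₂ * y ^ α + C) ≤ C * y / (P₂ * y ^ α)
      gcongr
      linarith
    have h2 : C / P₂ * y ^ (1 - α) = C * y / (P₂ * y ^ α) := by
      rw [sub_eq_add_neg, Real.rpow_add hy0, Real.rpow_one, Real.rpow_neg hy0.le]
      field_simp
    rw [h2]; exact h1
  have hint2 : IntegrableOn g₀ (Ioi (1:ℝ)) := by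
    have hb : IntegrableOn (fun y : ℝ => C / P₂ * y ^ (1 - α)) (Ioi 1) :=
      (integrableOn_Ioi_rpow_of_lt (by linarith) one_pos).const_mul _
    have hsub : Ioi (1:ℝ) ⊆ Ici (0:ℝ) := fun y hy => mem_Ici.mpr (le_of_lt (lt_trans one_pos (mem_Ioi.mp hy)))
    exact Integrable.mono' hb ((hcont.mono hsub).aestronglyMeasurable measurableSet_Ioi)
      ((ae_restrict_iff' measurableSet_Ioi).mpr (Eventually.of_forall hbound2))
  have hint : IntegrableOn g₀ (Ioi (0:ℝ)) := by
    rw [← Ioc_union_Ioi_eq_Ioi (zero_le_one : (0:ℝ) ≤ 1)]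
    exact hint1.union hint2
  have hintg : IntegrableOn g (Ioi (0:ℝ)) :=
    hint.congr_fun (fun y hy => (hgg₀ y hy).symm) measurableSet_Ioi
  have hintF : IntegrableOn (fun y => 2 * π * g y) (Ioi (0:ℝ)) := hintg.const_mul (2 * π)
  -- the closed form of the full-plane integral
  set J := ∫ u in Ioi (0:ℝ), 1 / (1 + u ^ (α / 2)) with hJdef
  set k := (C / P₂) ^ (α⁻¹) with hkdef
  have hCP : (0:ℝ) < C / P₂ := div_pos hC0 hP₂
  have hk0 : 0 < k := Real.rpow_pos_of_pos hCP _
  have hkα : k ^ α = C / P₂ := by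
    rw [hkdef, ← Real.rpow_mul hCP.le, inv_mul_cancel₀ hα0.ne', Real.rpow_one]
  have hhalf : (∫ t in Ioi (0:ℝ), t / (1 + t ^ α)) = (1 / 2) * J := by
    have h2 := integral_comp_rpow_Ioi (fun u : ℝ => 1 / (1 + u ^ (α / 2))) (p := 2) two_ne_zero
    have h3 : EqOn (fun x : ℝ => (|(2:ℝ)| * x ^ ((2:ℝ) - 1)) • (1 / (1 + (x ^ (2:ℝ)) ^ (α / 2))))
        (fun x : ℝ => 2 * (x / (1 + x ^ α))) (Ioi 0) := by
      intro x hx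
      have hx0 : (0:ℝ) < x := hx
      have e1 : (x ^ (2:ℝ)) ^ (α / 2) = x ^ α := by
        rw [← Real.rpow_mul hx0.le]
        congr 1
        ring
      have e2 : x ^ ((2:ℝ) - 1) = x := by
        norm_num
      simp only [e1, e2, smul_eq_mul, abs_of_nonneg (by norm_num : (0:ℝ) ≤ 2)]
      ring
    rw [setIntegral_congr_fun measurableSet_Ioi h3, integral_const_mul] at h2
    linarith [h2]
  have hcomp : EqOn (fun t => g₀ (k * t)) (fun t : ℝ => k * (t / (1 + t ^ α))) (Ioi 0) := by
    intro t ht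
    have ht0 : (0:ℝ) < t := ht
    have htα : (0:ℝ) < t ^ α := Real.rpow_pos_of_pos ht0 α
    have e1 : (k * t) ^ α = k ^ α * t ^ α := Real.mul_rpow hk0.le ht0.le
    show C * (k * t) / (P₂ * (k * t) ^ α + C) = k * (t / (1 + t ^ α))
    rw [e1, hkα]
    have hne : (1:ℝ) + t ^ α ≠ 0 := by positivity
    field_simp
    ring
  have hscale : (∫ y in Ioi (0:ℝ), g₀ y) = k * (k * ∫ t in Ioi (0:ℝ), t / (1 + t ^ α)) := by
    have h1 := integral_comp_mul_left_Ioi g₀ 0 hk0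
    rw [mul_zero, smul_eq_mul] at h1
    calc (∫ y in Ioi (0:ℝ), g₀ y) = k * ∫ x in Ioi (0:ℝ), g₀ (k * x) := by
          rw [h1, ← mul_assoc, mul_inv_cancel₀ hk0.ne', one_mul]
      _ = k * (k * ∫ t in Ioi (0:ℝ), t / (1 + t ^ α)) := by
          rw [setIntegral_congr_fun measurableSet_Ioi hcomp, integral_const_mul]
  have hk2 : k * k = (C / P₂) ^ (2 / α) := by
    rw [hkdef, ← Real.rpow_add hCP]
    congr 1
    ring
  have key2 : (∫ y in Ioi (0:ℝ), 2 * π * g y) = π * (C / P₂) ^ (2 / α) * J := by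
    have hcongr : (∫ y in Ioi (0:ℝ), 2 * π * g y) = ∫ y in Ioi (0:ℝ), 2 * π * g₀ y :=
      setIntegral_congr_fun measurableSet_Ioi (fun y hy => by rw [hgg₀ y hy])
    rw [hcongr, integral_const_mul, hscale, hhalf, ← hk2]
    ring
  refine ⟨?_, key2⟩
  -- the limit part
  have main : ∀ R ∈ Ioo (0:ℝ) d,
      ‖((∫ y in Set.Ioi (R + d), 2 * π * g y) +
          (∫ y in Set.Ioc |R - d| (R + d),
            2 * Real.arccos ((R ^ 2 - d ^ 2 - y ^ 2) / (2 * d * y)) * g y) +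
          (∫ y in Set.Ioc (max 0 (R - d)) |R - d|, 2 * π * g y)) -
        (∫ y in Set.Ioi (0 : ℝ), 2 * π * g y)‖ ≤ 16 * π * d * R := by
    intro R hR
    obtain ⟨hR0, hRd⟩ := hR
    have habs : |R - d| = d - R := by rw [abs_of_neg (by linarith)]; ring
    have hmax : max 0 (R - d) = 0 := max_eq_left (by linarith)
    rw [habs, hmax]
    have hdR0 : (0:ℝ) ≤ d - R := by linarith
    have hdRle : d - R ≤ R + d := by linarith
    have hsub1 : Ioc (d - R) (R + d) ⊆ Ioi (0:ℝ) := by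
      intro y hy
      have := hy.1
      show (0:ℝ) < y
      linarith
    have hsplit : (∫ y in Ioi (0:ℝ), 2 * π * g y) =
        (∫ y in Ioc (0:ℝ) (d - R), 2 * π * g y) + (∫ y in Ioc (d - R) (R + d), 2 * π * g y) +
          (∫ y in Ioi (R + d), 2 * π * g y) := by
      rw [← Ioc_union_Ioi_eq_Ioi (show (0:ℝ) ≤ R + d by linarith),
        setIntegral_union Ioc_disjoint_Ioi_same measurableSet_Ioi
          (hintF.mono_set Ioc_subset_Ioi_self) (hintF.mono_set (Ioi_subset_Ioi (by linarith))),
        ← Ioc_union_Ioc_eq_Ioc hdR0 hdRle,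
        setIntegral_union (Ioc_disjoint_Ioc_of_le le_rfl) measurableSet_Ioc
          (hintF.mono_set Ioc_subset_Ioi_self) (hintF.mono_set hsub1)]
    rw [hsplit]
    have hvol : volume (Ioc (d - R) (R + d)) < ⊤ := measure_Ioc_lt_top
    have hvolR : (volume (Ioc (d - R) (R + d))).toReal = 2 * R := by
      rw [Real.volume_Ioc, ENNReal.toReal_ofReal (by linarith)]
      ring
    have hπ : (0:ℝ) < π := Real.pi_pos
    have hNle : ∀ y ∈ Ioc (d - R) (R + d), ‖2 * π * g y‖ ≤ 4 * π * d := by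
      intro y hy
      have hy0 : (0:ℝ) < y := hsub1 hy
      have h2 : g₀ y ≤ y := hg₀le y hy0.le
      have h3 : y ≤ R + d := hy.2
      rw [hgg₀ y hy0, Real.norm_of_nonneg (by positivity)]
      nlinarith [hg₀nonneg y hy0.le]
    have hN : ‖∫ y in Ioc (d - R) (R + d), 2 * π * g y‖ ≤ 8 * π * d * R := by
      have h := norm_setIntegral_le_of_norm_le_const hvol hNle
      rw [measureReal_def, hvolR] at h
      linarith
    have hMle : ∀ y ∈ Ioc (d - R) (R + d),
        ‖2 * Real.arccos ((R ^ 2 - d ^ 2 - y ^ 2) / (2 * d * y)) * g y‖ ≤ 4 * π * d := by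
      intro y hy
      have hy0 : (0:ℝ) < y := hsub1 hy
      have h2 : g₀ y ≤ y := hg₀le y hy0.le
      have h3 : y ≤ R + d := hy.2
      have harc0 : 0 ≤ Real.arccos ((R ^ 2 - d ^ 2 - y ^ 2) / (2 * d * y)) := Real.arccos_nonneg _
      have harcπ : Real.arccos ((R ^ 2 - d ^ 2 - y ^ 2) / (2 * d * y)) ≤ π := Real.arccos_le_pi _
      rw [hgg₀ y hy0, norm_mul, Real.norm_of_nonneg (by positivity),
        Real.norm_of_nonneg (hg₀nonneg y hy0.le)]
      have hb1 : 2 * Real.arccos ((R ^ 2 - d ^ 2 - y ^ 2) / (2 * d * y)) ≤ 2 * π := by linarith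
      have hb2 : g₀ y ≤ 2 * d := by linarith
      calc 2 * Real.arccos ((R ^ 2 - d ^ 2 - y ^ 2) / (2 * d * y)) * g₀ y ≤ (2 * π) * (2 * d) :=
            mul_le_mul hb1 hb2 (hg₀nonneg y hy0.le) (by positivity)
        _ = 4 * π * d := by ring
    have hM : ‖∫ y in Ioc (d - R) (R + d),
        2 * Real.arccos ((R ^ 2 - d ^ 2 - y ^ 2) / (2 * d * y)) * g y‖ ≤ 8 * π * d * R := by
      have h := norm_setIntegral_le_of_norm_le_const hvol hMle
      rw [measureReal_def, hvolR] at h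
      linarith
    have hrw : ∀ A M B N : ℝ, (A + M + B) - (B + N + A) = M - N := fun _ _ _ _ => by ring
    rw [hrw]
    calc ‖(∫ y in Ioc (d - R) (R + d),
            2 * Real.arccos ((R ^ 2 - d ^ 2 - y ^ 2) / (2 * d * y)) * g y) -
          (∫ y in Ioc (d - R) (R + d), 2 * π * g y)‖ ≤ _ + _ := norm_sub_le _ _
      _ ≤ 16 * π * d * R := by linarith
  have hev : ∀ᶠ R in nhdsWithin (0:ℝ) (Ioi 0),
      ‖((∫ y in Set.Ioi (R + d), 2 * π * g y) +
          (∫ y in Set.Ioc |R - d| (R + d),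
            2 * Real.arccos ((R ^ 2 - d ^ 2 - y ^ 2) / (2 * d * y)) * g y) +
          (∫ y in Set.Ioc (max 0 (R - d)) |R - d|, 2 * π * g y)) -
        (∫ y in Set.Ioi (0 : ℝ), 2 * π * g y)‖ ≤ 16 * π * d * R := by
    filter_upwards [Ioo_mem_nhdsGT_of_mem (show (0:ℝ) ∈ Ico (0:ℝ) d from ⟨le_refl _, hd⟩)]
      with R hR
    exact main R hR
  have hlin : Tendsto (fun R : ℝ => 16 * π * d * R) (nhdsWithin 0 (Ioi 0)) (nhds 0) := by
    have h : Tendsto (fun R : ℝ => 16 * π * d * R) (nhds 0) (nhds (16 * π * d * 0)) :=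
      (continuous_const.mul continuous_id).tendsto 0
    rw [mul_zero] at h
    exact h.mono_left nhdsWithin_le_nhds
  have hz := squeeze_zero_norm' hev hlin
  have hfinal := hz.add_const (∫ y in Set.Ioi (0 : ℝ), 2 * π * g y)
  simpa using hfinal
end
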